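/- Let Q be a finite loop and let C be a nonempty column-entry regular subset of the multiplication table of Q. Then P(C_r), the set of elements expressible as a product containing each element of the multiset C_r of rows of C exactly as often as it occurs, intersects the associator subloop A(Q). -/

import Mathlib

/-- A loop: a magma with two-sided identity in which all left and right
translations are bijections. -/
class Loop (Q : Type*) extends Mul Q, One Q where
  one_mul : ∀ a : Q, 1 * a = a
  mul_one : ∀ a : Q, a * 1 = a
  mulLeft_bijective : ∀ a : Q, Function.Bijective fun x : Q => a * x
  mulRight_bijective : ∀ a : Q, Function.Bijective fun x : Q => x * a

/-- `IsProdOf s x` means `x` can be written as a product, under some ordering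
and association, whose multiset of factors is exactly `s`. -/
inductive IsProdOf {Q : Type*} [Mul Q] : Multiset Q → Q → Prop
  | single (a : Q) : IsProdOf {a} a
  | mul {s t : Multiset Q} {a b : Q} :
      IsProdOf s a → IsProdOf t b → IsProdOf (s + t) (a * b)

/-- `fullProds Q k` is `P^k(Q)`: elements expressible as a product (in some
order and association) containing each element of `Q` exactly `k` times. -/
def fullProds (Q : Type*) [Mul Q] [Fintype Q] (k : ℕ) : Set Q :=
  {x | IsProdOf (k • (Finset.univ : Finset Q).val) x}

/-- The smallest congruence on `Q` whose quotient is a group; its class of `1`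
is the associator subloop `A(Q)`, and its classes are the cosets of `A(Q)`. -/
def assocRel {Q : Type*} [Mul Q] (x y : Q) : Prop :=
  ∀ r : Q → Q → Prop, Equivalence r →
    (∀ a b c d, r a b → r c d → r (a * c) (b * d)) →
    (∀ a b c, r ((a * b) * c) (a * (b * c))) →
    r x y

/-- The smallest congruence on `Q` whose quotient is an abelian group; its
class of `1` is the derived subloop `Q'`, and its classes are the cosets of `Q'`. -/
def commRel {Q : Type*} [Mul Q] (x y : Q) : Prop :=
  ∀ r : Q → Q → Prop, Equivalence r →
    (∀ a b c d, r a b → r c d → r (a * c) (b * d)) →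
    (∀ a b c, r ((a * b) * c) (a * (b * c))) →
    (∀ a b, r (a * b) (b * a)) →
    r x y

section Aux

variable {Q : Type*} [Mul Q]

theorem assocRel_refl (x : Q) : assocRel x x := fun _ hr _ _ => hr.refl x

theorem assocRel_symm {x y : Q} (h : assocRel x y) : assocRel y x :=
  fun r hr hm ha => hr.symm (h r hr hm ha)

theorem assocRel_trans {x y z : Q} (h1 : assocRel x y) (h2 : assocRel y z) :
    assocRel x z :=
  fun r hr hm ha => hr.trans (h1 r hr hm ha) (h2 r hr hm ha)

theorem assocRel_mul {a b c d : Q} (h1 : assocRel a b) (h2 : assocRel c d) :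
    assocRel (a * c) (b * d) :=
  fun r hr hm ha => hm _ _ _ _ (h1 r hr hm ha) (h2 r hr hm ha)

theorem assocRel_assoc (a b c : Q) : assocRel ((a * b) * c) (a * (b * c)) :=
  fun _ _ _ ha => ha a b c

instance assocSetoid (Q : Type*) [Mul Q] : Setoid Q :=
  ⟨assocRel, ⟨assocRel_refl, assocRel_symm, assocRel_trans⟩⟩

/-- The quotient of a loop by the associator congruence. -/
abbrev AQuot (Q : Type*) [Mul Q] := Quotient (assocSetoid Q)

instance {Q : Type*} [Loop Q] : Monoid (AQuot Q) where
  mul := Quotient.map₂ (· * ·) fun _ _ h _ _ h2 => assocRel_mul h h2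
  one := ⟦1⟧
  mul_assoc a b c := by
    induction a using Quotient.ind
    induction b using Quotient.ind
    induction c using Quotient.ind
    exact Quotient.sound (assocRel_assoc _ _ _)
  one_mul a := by
    induction a using Quotient.ind with
    | _ a => exact congrArg (Quotient.mk _) (Loop.one_mul a)
  mul_one a := by
    induction a using Quotient.ind with
    | _ a => exact congrArg (Quotient.mk _) (Loop.mul_one a)

variable {Q : Type*} [Loop Q]

@[simp] theorem AQuot.mk_mul (a b : Q) :
    (⟦a⟧ : AQuot Q) * ⟦b⟧ = (⟦a * b⟧ : AQuot Q) := rfl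

theorem AQuot.one_def : (1 : AQuot Q) = ⟦(1 : Q)⟧ := rfl

theorem AQuot.cancel_right [Fintype Q] (e : Q) {m n : AQuot Q}
    (h : m * ⟦e⟧ = n * ⟦e⟧) : m = n := by
  have hsurj : Function.Surjective (fun m : AQuot Q => m * ⟦e⟧) := by
    intro z
    induction z using Quotient.ind with
    | _ z =>
      obtain ⟨w, hw⟩ := (Loop.mulRight_bijective e).2 z
      exact ⟨⟦w⟧, by simpa using congrArg (Quotient.mk _) hw⟩
  have hinj : Function.Injective (fun m : AQuot Q => m * ⟦e⟧) :=
    Finite.injective_iff_surjective.mpr hsurj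
  exact hinj h

/-- The telescoping chain lemma. -/
theorem chain [Fintype Q] [DecidableEq Q] (n : ℕ) :
    ∀ L : List (Q × Q × Q), L.length = n →
    (∀ t ∈ L, t.2.2 = t.1 * t.2.1) →
    ∀ a b : Q,
    (↑(L.map (fun t => t.2.2)) : Multiset Q) + {b}
      = (↑(L.map (fun t => t.2.1)) : Multiset Q) + {a} →
    ∃ L' : List (Q × Q × Q), L'.Perm L ∧
      ((L'.map (fun t => (⟦t.1⟧ : AQuot Q))).prod) * ⟦b⟧ = (⟦a⟧ : AQuot Q) := by
  induction n with
  | zero =>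
    intro L hL _ a b hEq
    rw [List.length_eq_zero_iff] at hL
    subst hL
    simp only [List.map_nil, Multiset.coe_nil, zero_add] at hEq
    rw [Multiset.singleton_inj] at hEq
    subst hEq
    exact ⟨[], List.Perm.refl _, by simp⟩
  | succ n ih =>
    intro L hL htab a b hEq
    by_cases hex : ∃ t ∈ L, t.2.2 = a
    · obtain ⟨t, htL, hta⟩ := hex
      obtain ⟨l1, l2, rfl⟩ := List.append_of_mem htL
      set T := l1 ++ l2 with hT
      set L := l1 ++ t :: l2 with hLdef
      have hperm : L.Perm (t :: T) := List.perm_middle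
      have hlen : T.length = n := by
        have h1 := hperm.length_eq
        simp only [List.length_cons] at h1
        omega
      have htab' : ∀ u ∈ T, u.2.2 = u.1 * u.2.1 := by
        intro u hu
        exact htab u (hperm.symm.subset (List.mem_cons_of_mem t hu))
      have hmape : (↑(L.map (fun t => t.2.2)) : Multiset Q)
          = t.2.2 ::ₘ ↑(T.map (fun t => t.2.2)) := by
        have h1 := (hperm.map (fun t => t.2.2))
        rw [← Multiset.coe_eq_coe] at h1
        simpa using h1
      have hmapc : (↑(L.map (fun t => t.2.1)) : Multiset Q)
          = t.2.1 ::ₘ ↑(T.map (fun t => t.2.1)) := by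
        have h1 := (hperm.map (fun t => t.2.1))
        rw [← Multiset.coe_eq_coe] at h1
        simpa using h1
      have hEq' : (↑(T.map (fun t => t.2.2)) : Multiset Q) + {b}
          = (↑(T.map (fun t => t.2.1)) : Multiset Q) + {t.2.1} := by
        rw [hmape, hmapc, hta] at hEq
        have h2 : ((↑(T.map (fun t => t.2.2)) : Multiset Q) + {b}) + {a}
            = ((↑(T.map (fun t => t.2.1)) : Multiset Q) + {t.2.1}) + {a} := by
          ext s
          have h3 := congrArg (Multiset.count s) hEq
          simp only [Multiset.count_add, Multiset.count_cons,
            Multiset.count_singleton] at h3 ⊢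
          omega
        exact add_right_cancel h2
      obtain ⟨L₂, hL₂perm, hL₂prod⟩ := ih T hlen htab' t.2.1 b hEq'
      refine ⟨t :: L₂, (hL₂perm.cons t).trans hperm.symm, ?_⟩
      have hrc : t.2.2 = t.1 * t.2.1 := htab t htL
      calc ((t :: L₂).map (fun t => (⟦t.1⟧ : AQuot Q))).prod * ⟦b⟧
          = ⟦t.1⟧ * (((L₂.map (fun t => (⟦t.1⟧ : AQuot Q))).prod) * ⟦b⟧) := by
            rw [List.map_cons, List.prod_cons, mul_assoc]
        _ = ⟦t.1⟧ * ⟦t.2.1⟧ := by rw [hL₂prod]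
        _ = ⟦a⟧ := by rw [AQuot.mk_mul, ← hrc, hta]
    · push_neg at hex
      have hcnt : Multiset.count a (↑(L.map (fun t => t.2.2)) : Multiset Q) = 0 := by
        rw [Multiset.count_eq_zero]
        intro hmem
        rw [Multiset.mem_coe, List.mem_map] at hmem
        obtain ⟨t, htL, hte⟩ := hmem
        exact hex t htL hte
      have hcount := congrArg (Multiset.count a) hEq
      simp only [Multiset.count_add, hcnt, Multiset.count_singleton, if_pos rfl] at hcount
      have hba : b = a := by
        by_contra hne'
        rw [if_neg (fun h => hne' h.symm)] at hcount
        simp only [if_true] at hcount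
        omega
      subst hba
      have hEq2 : (↑(L.map (fun t => t.2.2)) : Multiset Q)
          = (↑(L.map (fun t => t.2.1)) : Multiset Q) :=
        add_right_cancel hEq
      match L, hL with
      | t :: T, hL =>
        have hlen : T.length = n := by simpa using hL
        have htab' : ∀ u ∈ T, u.2.2 = u.1 * u.2.1 :=
          fun u hu => htab u (List.mem_cons_of_mem t hu)
        have hEq' : (↑(T.map (fun t => t.2.2)) : Multiset Q) + {t.2.2}
            = (↑(T.map (fun t => t.2.1)) : Multiset Q) + {t.2.1} := by
          ext s
          have h3 := congrArg (Multiset.count s) hEq2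
          simp only [List.map_cons, ← Multiset.cons_coe, Multiset.count_add,
            Multiset.count_cons, Multiset.count_singleton] at h3 ⊢
          omega
        obtain ⟨L₂, hL₂perm, hL₂prod⟩ := ih T hlen htab' t.2.1 t.2.2 hEq'
        refine ⟨t :: L₂, hL₂perm.cons t, ?_⟩
        have hrc : t.2.2 = t.1 * t.2.1 := htab t List.mem_cons_self
        have key : (⟦t.1⟧ : AQuot Q) * (L₂.map (fun t => (⟦t.1⟧ : AQuot Q))).prod = 1 := by
          apply AQuot.cancel_right t.2.2
          rw [one_mul, mul_assoc, hL₂prod, AQuot.mk_mul, ← hrc]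
        rw [List.map_cons, List.prod_cons, key, one_mul]

theorem exists_isProdOf : ∀ l : List Q, l ≠ [] →
    ∃ x : Q, IsProdOf (↑l : Multiset Q) x ∧
      (⟦x⟧ : AQuot Q) = (l.map (fun q => (⟦q⟧ : AQuot Q))).prod := by
  intro l
  induction l with
  | nil => intro h; exact absurd rfl h
  | cons a l ih =>
    intro _
    match l, ih with
    | [], _ =>
      refine ⟨a, ?_, by simp⟩
      have : (↑[a] : Multiset Q) = {a} := rfl
      rw [this]
      exact IsProdOf.single a
    | b :: T, ih =>
      obtain ⟨y, hy, hyc⟩ := ih (by simp)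
      refine ⟨a * y, ?_, by rw [List.map_cons, List.prod_cons, ← hyc]; rfl⟩
      have : (↑(a :: b :: T) : Multiset Q) = {a} + ↑(b :: T) := by
        simp [Multiset.singleton_add]
      rw [this]
      exact IsProdOf.mul (IsProdOf.single a) hy

end Aux

theorem regular_subset_full_prod_mem_associator (Q : Type*) [Loop Q] [Fintype Q]
    [DecidableEq Q] (C : Finset (Q × Q × Q))
    (hne : C.Nonempty)
    (htable : ∀ t ∈ C, t.2.2 = t.1 * t.2.1)
    (hreg : ∀ s : Q, (C.filter fun t => t.2.1 = s).card
                    = (C.filter fun t => t.2.2 = s).card) :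
    ∃ x : Q, IsProdOf (C.val.map Prod.fst) x ∧ assocRel x 1 := by
  classical
  set L : List (Q × Q × Q) := C.toList with hLdef
  have hLcoe : (↑L : Multiset (Q × Q × Q)) = C.val := Finset.coe_toList C
  have htab : ∀ t ∈ L, t.2.2 = t.1 * t.2.1 := by
    intro t ht
    exact htable t (by rwa [← Finset.mem_toList])
  -- multiset of entries equals multiset of columns
  have hms : (↑(L.map (fun t => t.2.2)) : Multiset Q)
      = (↑(L.map (fun t => t.2.1)) : Multiset Q) := by
    ext s
    rw [← Multiset.map_coe, ← Multiset.map_coe, hLcoe,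
      Multiset.count_map, Multiset.count_map]
    have h1 : (C.filter fun t => t.2.1 = s).card
        = (Multiset.filter (fun t => t.2.1 = s) C.val).card := by
      rw [Finset.card, Finset.filter_val]
    have h2 : (C.filter fun t => t.2.2 = s).card
        = (Multiset.filter (fun t => t.2.2 = s) C.val).card := by
      rw [Finset.card, Finset.filter_val]
    have := hreg s
    rw [h1, h2] at this
    simpa [eq_comm] using this.symm
  have hEq : (↑(L.map (fun t => t.2.2)) : Multiset Q) + {(1 : Q)}
      = (↑(L.map (fun t => t.2.1)) : Multiset Q) + {(1 : Q)} := by rw [hms]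
  obtain ⟨L', hperm, hprod⟩ := chain L.length L rfl htab 1 1 hEq
  have hLne : L ≠ [] := by
    intro h
    obtain ⟨t, ht⟩ := hne
    rw [← Finset.mem_toList, ← hLdef, h] at ht
    exact absurd ht List.not_mem_nil
  have hL'ne : L'.map Prod.fst ≠ [] := by
    intro h
    rw [List.map_eq_nil_iff] at h
    rw [h] at hperm
    exact hLne hperm.nil_eq.symm
  obtain ⟨x, hx, hxc⟩ := exists_isProdOf (L'.map Prod.fst) hL'ne
  refine ⟨x, ?_, ?_⟩
  · have hcoe : (↑(L'.map Prod.fst) : Multiset Q) = C.val.map Prod.fst := by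
      rw [← Multiset.map_coe, Multiset.coe_eq_coe.mpr hperm, hLcoe]
    rwa [hcoe] at hx
  · have hprod' : (L'.map (fun t => (⟦t.1⟧ : AQuot Q))).prod = ⟦(1 : Q)⟧ := by
      have := hprod
      rwa [show (⟦(1 : Q)⟧ : AQuot Q) = 1 from rfl, mul_one] at this
    have hxc' : (⟦x⟧ : AQuot Q) = ⟦(1 : Q)⟧ := by
      rw [hxc, List.map_map]
      exact hprod'
    exact Quotient.exact hxc'
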